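/- Combining the two previous results: for even k, the minimum number of control nodes of a k-uniform hyperchain on n ≥ k nodes is exactly k−1; that is, there exists a set of k−1 nodes whose input matrix B makes 𝒞(A,B) = ℝⁿ, while no set of k−2 nodes does. -/
import Mathlib


noncomputable section
open Classical

/-- Prepend `j` to the index tuple `js`. -/
def consIdx {n k : ℕ} (j : Fin n) (js : Fin (k - 1) → Fin n) : Fin k → Fin n :=
  fun t => if h : (t : ℕ) = 0 then j
    else js ⟨(t : ℕ) - 1, by have := t.isLt; omega⟩

/-- Adjacency tensor of a `k`-uniform hypergraph with hyperedge set `E`. -/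
def adjT (n k : ℕ) (E : Finset (Finset (Fin n))) : (Fin k → Fin n) → ℝ :=
  fun j => if Function.Injective j ∧ Finset.image j Finset.univ ∈ E
    then ((Nat.factorial (k - 1) : ℝ))⁻¹ else 0

/-- Contraction of a `k`-th order tensor along `k−1` modes with vectors `v`. -/
def tcontract {n k : ℕ} (A : (Fin k → Fin n) → ℝ) (v : Fin (k - 1) → (Fin n → ℝ)) :
    Fin n → ℝ :=
  fun j => ∑ js : Fin (k - 1) → Fin n, A (consIdx j js) * ∏ i, v i (js i)

/-- The controllability subspace `𝒞(A,B)`: the smallest subspace of `ℝⁿ` containing the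
set `Bc` of input columns and closed under the contraction map `v₁,…,v_{k−1} ↦ A v₁ ⋯ v_{k−1}`. -/
def ctrlSpace {n k : ℕ} (A : (Fin k → Fin n) → ℝ) (Bc : Set (Fin n → ℝ)) :
    Submodule ℝ (Fin n → ℝ) :=
  sInf {W : Submodule ℝ (Fin n → ℝ) | Bc ⊆ ↑W ∧
    ∀ v : Fin (k - 1) → (Fin n → ℝ), (∀ i, v i ∈ W) → tcontract A v ∈ W}

/-- The hyperedge `{l, l+1, …, l+k−1}` of a `k`-uniform hyperchain. -/
def chainEdge (n k l : ℕ) : Finset (Fin n) :=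
  Finset.univ.filter (fun i => l ≤ (i : ℕ) ∧ (i : ℕ) < l + k)

/-- The hyperedge set of the `k`-uniform hyperchain on `n` nodes. -/
def chainE (n k : ℕ) : Finset (Finset (Fin n)) :=
  (Finset.range (n - k + 1)).image (chainEdge n k)

/-- Adjacency tensor of the complete `k`-uniform hypergraph on `n` nodes. -/
def completeT (n k : ℕ) : (Fin k → Fin n) → ℝ :=
  fun j => if Function.Injective j then ((Nat.factorial (k - 1) : ℝ))⁻¹ else 0

section AuxLemmas
variable {n k : ℕ}

lemma consIdx_zero (hk : 1 ≤ k) (j : Fin n) (f : Fin (k - 1) → Fin n) :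
    consIdx j f ⟨0, by omega⟩ = j := by simp [consIdx]

lemma consIdx_succ (j : Fin n) (f : Fin (k - 1) → Fin n) (i : Fin (k - 1)) :
    consIdx j f ⟨(i : ℕ) + 1, by have := i.isLt; omega⟩ = f i := by
  simp only [consIdx, Nat.add_sub_cancel]
  rw [dif_neg (by simp)]

lemma consIdx_injective {j : Fin n} {f : Fin (k - 1) → Fin n}
    (hf : Function.Injective f) (hj : ∀ i, f i ≠ j) :
    Function.Injective (consIdx j f) := by
  intro a b hab
  unfold consIdx at hab
  by_cases ha : (a : ℕ) = 0 <;> by_cases hb : (b : ℕ) = 0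
  · exact Fin.ext (by omega)
  · rw [dif_pos ha, dif_neg hb] at hab; exact absurd hab.symm (hj _)
  · rw [dif_neg ha, dif_pos hb] at hab; exact absurd hab (hj _)
  · rw [dif_neg ha, dif_neg hb] at hab
    have := hf hab
    rw [Fin.ext_iff] at this ⊢
    simp only [] at this
    omega

lemma injective_of_consIdx {j : Fin n} {f : Fin (k - 1) → Fin n}
    (h : Function.Injective (consIdx j f)) : Function.Injective f := by
  intro a b hab
  have h2 := h (a₁ := ⟨(a : ℕ) + 1, by have := a.isLt; omega⟩)
    (a₂ := ⟨(b : ℕ) + 1, by have := b.isLt; omega⟩)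
    (by rw [consIdx_succ, consIdx_succ]; exact hab)
  rw [Fin.ext_iff] at h2 ⊢
  simpa using h2

lemma ne_of_consIdx {j : Fin n} {f : Fin (k - 1) → Fin n}
    (h : Function.Injective (consIdx j f)) (i : Fin (k - 1)) : f i ≠ j := by
  have hk : 1 ≤ k := by have := i.isLt; omega
  intro he
  have h2 : consIdx j f ⟨(i : ℕ) + 1, by have := i.isLt; omega⟩ = consIdx j f ⟨0, by omega⟩ := by
    rw [consIdx_succ, consIdx_zero hk]; exact he
  have := h h2
  rw [Fin.ext_iff] at this
  simp at this

lemma mem_image_consIdx (hk : 1 ≤ k) (j : Fin n) (f : Fin (k - 1) → Fin n) (x : Fin n) :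
    x ∈ Finset.image (consIdx j f) Finset.univ ↔ x = j ∨ ∃ i, x = f i := by
  simp only [Finset.mem_image, Finset.mem_univ, true_and]
  constructor
  · rintro ⟨t, rfl⟩
    by_cases ht : (t : ℕ) = 0
    · left; have : t = ⟨0, by omega⟩ := Fin.ext ht
      rw [this, consIdx_zero hk]
    · right
      refine ⟨⟨(t : ℕ) - 1, by have := t.isLt; omega⟩, ?_⟩
      rw [← consIdx_succ j f ⟨(t : ℕ) - 1, by have := t.isLt; omega⟩]
      congr 1
      exact Fin.ext (by simp; omega)
  · rintro (rfl | ⟨i, rfl⟩)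
    · exact ⟨⟨0, by omega⟩, consIdx_zero hk _ f⟩
    · exact ⟨⟨(i : ℕ) + 1, by have := i.isLt; omega⟩, consIdx_succ _ f i⟩

lemma prod_single_eq (f js : Fin (k - 1) → Fin n) :
    (∏ i : Fin (k - 1), (Pi.single (f i) (1 : ℝ) : Fin n → ℝ) (js i)) = if js = f then 1 else 0 := by
  split_ifs with h
  · subst h; simp
  · obtain ⟨i, hi⟩ : ∃ i, js i ≠ f i := by
      by_contra hc; push_neg at hc; exact h (funext hc)
    apply Finset.prod_eq_zero (Finset.mem_univ i)
    simp [Pi.single_apply, hi]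

lemma tcontract_single (A : (Fin k → Fin n) → ℝ) (f : Fin (k - 1) → Fin n) :
    tcontract A (fun i => Pi.single (f i) 1) = fun j => A (consIdx j f) := by
  funext j
  unfold tcontract
  rw [Fintype.sum_eq_single f]
  · rw [prod_single_eq, if_pos rfl, mul_one]
  · intro b hb
    rw [prod_single_eq, if_neg hb, mul_zero]

/-- Functions vanishing off `S`, as a submodule. -/
def offSupp (S : Finset (Fin n)) : Submodule ℝ (Fin n → ℝ) where
  carrier := {x | ∀ t ∉ S, x t = 0}
  add_mem' := by intro a b ha hb t ht; simp [ha t ht, hb t ht]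
  zero_mem' := by intro t ht; rfl
  smul_mem' := by intro c x hx t ht; simp [hx t ht]

lemma mem_offSupp {S : Finset (Fin n)} {x : Fin n → ℝ} :
    x ∈ offSupp S ↔ ∀ t ∉ S, x t = 0 := Iff.rfl

lemma chain_contract (hk : 2 ≤ k) (hkn : k ≤ n) {m : ℕ} (hm1 : k - 1 ≤ m) (hm2 : m < n) :
    (fun j => adjT n k (chainE n k)
        (consIdx j (fun i : Fin (k - 1) =>
          (⟨m - (k - 1) + (i : ℕ), by have := i.isLt; omega⟩ : Fin n)))) =
      ((Nat.factorial (k - 1) : ℝ))⁻¹ •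
        ((Pi.single (⟨m, hm2⟩ : Fin n) 1 : Fin n → ℝ) +
          (if h : k ≤ m then (Pi.single (⟨m - k, by omega⟩ : Fin n) 1 : Fin n → ℝ)
            else 0)) := by
  set l := m - (k - 1) with hl
  set f : Fin (k - 1) → Fin n :=
    fun i => (⟨l + (i : ℕ), by have := i.isLt; omega⟩ : Fin n) with hf
  have hfinj : Function.Injective f := by
    intro a b hab
    rw [Fin.ext_iff] at hab ⊢
    simp only [hf] at hab
    omega
  have hmem : ∀ (j x : Fin n), x ∈ Finset.image (consIdx j f) Finset.univ ↔
      ((x : ℕ) = (j : ℕ) ∨ (l ≤ (x : ℕ) ∧ (x : ℕ) < l + (k - 1))) := by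
    intro j x
    rw [mem_image_consIdx (by omega)]
    constructor
    · rintro (rfl | ⟨i, rfl⟩)
      · left; rfl
      · right; have := i.isLt; simp only [hf]; omega
    · rintro (h | ⟨h1a, h1b⟩)
      · left; exact Fin.ext h
      · right; exact ⟨⟨(x : ℕ) - l, by omega⟩, Fin.ext (by simp only [hf]; omega)⟩
  funext j
  have hj := j.isLt
  simp only [Pi.smul_apply, smul_eq_mul, Pi.add_apply, dite_apply, Pi.zero_apply,
    Pi.single_apply, Fin.ext_iff]
  by_cases h1 : (j : ℕ) = m
  · have hz : (if h : k ≤ m then (if (j : ℕ) = (⟨m - k, by omega⟩ : Fin n).1 then (1:ℝ) else 0)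
        else 0) = 0 := by
      split_ifs with ha hb
      · simp only [Fin.val_mk] at hb; omega
      · rfl
      · rfl
    rw [hz, if_pos (by exact h1), add_zero, mul_one]
    unfold adjT
    rw [if_pos]
    constructor
    · apply consIdx_injective hfinj
      intro i he
      rw [Fin.ext_iff] at he
      simp only [hf] at he
      have := i.isLt
      omega
    · refine Finset.mem_image.mpr ⟨l, Finset.mem_range.mpr (by omega), ?_⟩
      ext x
      rw [hmem]
      have hx := x.isLt
      simp only [chainEdge, Finset.mem_filter, Finset.mem_univ, true_and]
      omega
  · by_cases h2 : k ≤ m ∧ (j : ℕ) = m - k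
    · obtain ⟨h2a, h2b⟩ := h2
      have hz1 : (if (j : ℕ) = (⟨m, hm2⟩ : Fin n).1 then (1:ℝ) else 0) = 0 := by
        rw [if_neg]; exact h1
      have hz2 : (if h : k ≤ m then (if (j : ℕ) = (⟨m - k, by omega⟩ : Fin n).1 then (1:ℝ) else 0)
          else 0) = 1 := by
        rw [dif_pos h2a, if_pos h2b]
      rw [hz1, hz2, zero_add, mul_one]
      unfold adjT
      rw [if_pos]
      constructor
      · apply consIdx_injective hfinj
        intro i he
        rw [Fin.ext_iff] at he
        simp only [hf] at he
        omega
      · refine Finset.mem_image.mpr ⟨m - k, Finset.mem_range.mpr (by omega), ?_⟩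
        ext x
        rw [hmem]
        have hx := x.isLt
        simp only [chainEdge, Finset.mem_filter, Finset.mem_univ, true_and]
        omega
    · have hz1 : (if (j : ℕ) = (⟨m, hm2⟩ : Fin n).1 then (1:ℝ) else 0) = 0 := by
        rw [if_neg]; exact h1
      have hz2 : (if h : k ≤ m then (if (j : ℕ) = (⟨m - k, by omega⟩ : Fin n).1 then (1:ℝ) else 0)
          else 0) = 0 := by
        split_ifs with ha hb
        · exact absurd ⟨ha, hb⟩ h2
        · rfl
        · rfl
      rw [hz1, hz2, add_zero, mul_zero]
      unfold adjT
      rw [if_neg]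
      rintro ⟨hinj, hE⟩
      obtain ⟨m', hm', hEe⟩ := Finset.mem_image.mp hE
      rw [Finset.mem_range] at hm'
      have e1 : (⟨l, by omega⟩ : Fin n) ∈ chainEdge n k m' := by
        rw [hEe, hmem]; right; simp only [Fin.val_mk]; omega
      have e2 : (⟨l + k - 2, by omega⟩ : Fin n) ∈ chainEdge n k m' := by
        rw [hEe, hmem]; right; simp only [Fin.val_mk]; omega
      have e3 : (⟨m', by omega⟩ : Fin n) ∈ chainEdge n k m' := by
        simp only [chainEdge, Finset.mem_filter, Finset.mem_univ, true_and]; omega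
      have e4 : (⟨m' + k - 1, by omega⟩ : Fin n) ∈ chainEdge n k m' := by
        simp only [chainEdge, Finset.mem_filter, Finset.mem_univ, true_and]; omega
      rw [hEe, hmem] at e3 e4
      simp only [chainEdge, Finset.mem_filter, Finset.mem_univ, true_and] at e1 e2
      have e5 : ¬(l ≤ (j : ℕ) ∧ (j : ℕ) < l + (k - 1)) := by
        rintro ⟨ha, hb⟩
        exact ne_of_consIdx hinj ⟨(j : ℕ) - l, by omega⟩
          (Fin.ext (by simp only [hf]; omega))
      simp only [Fin.val_mk] at e1 e2 e3 e4
      omega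

end AuxLemmas

/-- For even `k`, the minimum number of control nodes of the `k`-uniform hyperchain on
`n ≥ k` nodes is exactly `k−1`: some set of `k−1` nodes is controlling, while no set of
`k−2` nodes is. -/
theorem stmt10 {n k : ℕ} (hkeven : Even k) (hk : 2 ≤ k) (hkn : k ≤ n) :
    (∃ S : Finset (Fin n), S.card = k - 1 ∧
        ctrlSpace (adjT n k (chainE n k))
          {x | ∃ s ∈ S, x = (Pi.single s 1 : Fin n → ℝ)} = ⊤)
      ∧ ∀ S : Finset (Fin n), S.card = k - 2 →
        ctrlSpace (adjT n k (chainE n k))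
          {x | ∃ s ∈ S, x = (Pi.single s 1 : Fin n → ℝ)} ≠ ⊤ := by
  constructor
  · refine ⟨Finset.univ.image (Fin.castLE (show k - 1 ≤ n by omega)), ?_, ?_⟩
    · rw [Finset.card_image_of_injective _ (Fin.castLE_injective _), Finset.card_univ,
        Fintype.card_fin]
    · rw [ctrlSpace, eq_top_iff]
      refine le_sInf fun W hW => ?_
      obtain ⟨hB, hC⟩ := hW
      have hsingle : ∀ (m : ℕ) (hm : m < n), (Pi.single (⟨m, hm⟩ : Fin n) 1 : Fin n → ℝ) ∈ W := by
        intro m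
        induction m using Nat.strong_induction_on with
        | _ m IH =>
          intro hm
          by_cases hsmall : m < k - 1
          · apply hB
            refine ⟨⟨m, hm⟩, ?_, rfl⟩
            exact Finset.mem_image.mpr ⟨⟨m, hsmall⟩, Finset.mem_univ _, rfl⟩
          · push_neg at hsmall
            have hv : ∀ i : Fin (k - 1),
                (Pi.single ((fun i : Fin (k - 1) =>
                  (⟨m - (k - 1) + (i : ℕ), by have := i.isLt; omega⟩ : Fin n)) i) 1 :
                    Fin n → ℝ) ∈ W := by
              intro i
              have := i.isLt
              exact IH (m - (k - 1) + (i : ℕ)) (by omega) (by omega)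
            have hc := hC _ hv
            rw [tcontract_single, chain_contract hk hkn hsmall hm] at hc
            have hfac : ((Nat.factorial (k - 1) : ℝ)) ≠ 0 :=
              Nat.cast_ne_zero.mpr (Nat.factorial_ne_zero _)
            have hc2 := W.smul_mem ((Nat.factorial (k - 1) : ℝ)) hc
            rw [smul_smul, mul_inv_cancel₀ hfac, one_smul] at hc2
            have hCC : (if h : k ≤ m then
                (Pi.single (⟨m - k, by omega⟩ : Fin n) 1 : Fin n → ℝ) else 0) ∈ W := by
              split_ifs with h
              · exact IH (m - k) (by omega) (by omega)
              · exact W.zero_mem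
            have := W.sub_mem hc2 hCC
            simpa using this
      rw [top_le_iff, Submodule.eq_top_iff']
      intro x
      have hx : x = ∑ i : Fin n, x i • (Pi.single i 1 : Fin n → ℝ) := by
        funext j
        rw [Finset.sum_apply]
        simp [Pi.single_apply]
      rw [hx]
      refine Submodule.sum_mem _ fun i _ => Submodule.smul_mem _ _ ?_
      have := hsingle i.1 i.2
      simpa using this
  · intro S hS htop
    have hle : ctrlSpace (adjT n k (chainE n k))
        {x | ∃ s ∈ S, x = (Pi.single s 1 : Fin n → ℝ)} ≤ offSupp S := by
      refine sInf_le ⟨?_, ?_⟩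
      · rintro x ⟨s, hs, rfl⟩ t ht
        exact Pi.single_eq_of_ne (fun he => ht (by rwa [he])) 1
      · intro v hv
        rw [mem_offSupp]
        intro t ht
        unfold tcontract
        apply Finset.sum_eq_zero
        intro js _
        by_cases hp : ∀ i, js i ∈ S
        · have hz : adjT n k (chainE n k) (consIdx t js) = 0 := by
            unfold adjT
            rw [if_neg]
            rintro ⟨hinj, -⟩
            have hjsinj : Function.Injective js := injective_of_consIdx hinj
            have himg : Finset.image js Finset.univ ⊆ S := by
              intro y hy
              obtain ⟨i, -, rfl⟩ := Finset.mem_image.mp hy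
              exact hp i
            have h1 := Finset.card_le_card himg
            rw [Finset.card_image_of_injective _ hjsinj, Finset.card_univ,
              Fintype.card_fin, hS] at h1
            omega
          rw [hz, zero_mul]
        · push_neg at hp
          obtain ⟨i, hi⟩ := hp
          have hz : (∏ i', v i' (js i')) = 0 :=
            Finset.prod_eq_zero (Finset.mem_univ i) (hv i (js i) hi)
          rw [hz, mul_zero]
    obtain ⟨t, ht⟩ : ∃ t : Fin n, t ∉ S := by
      by_contra hc
      push_neg at hc
      have hsub : Finset.univ ⊆ S := fun t _ => hc t
      have := Finset.card_le_card hsub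
      rw [Finset.card_univ, Fintype.card_fin, hS] at this
      omega
    rw [htop] at hle
    have hmem : (Pi.single t 1 : Fin n → ℝ) ∈ offSupp S := hle trivial
    have := hmem t ht
    simp at this
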